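/- Let c : E(K_n) → {−1,1}, let F be a spanning forest of K_n, and fix distinct i_1,…,i_k ∈ {1,…,n}. Then E[c(E(F_π)) | (π(1),…,π(k)) = (i_1,…,i_k)] equals c(F_π[{i_1,…,i_k}]) + ∑_{j=1}^k \bar{c}({i_j ℓ : ℓ ∈ {1,…,n}\{i_1,…,i_k}}) · |N_F(j)\{1,…,k}| + \bar{c}(K_n − {i_1,…,i_k}) · m(F − {1,…,k}), where \bar{c}(E) denotes the average of c over an edge set E, c(F_π[{i_1,…,i_k}]) is the sum of c over edges π(u)π(v) with u,v ≤ k and uv ∈ E(F), and m(F − {1,…,k}) is the number of edges of F with both endpoints in {k+1,…,n}. -/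

import Mathlib

/-- The embedding of the already-fixed vertices: vertex `j` of `F` (index `j < k`) is sent to
`i j`; other vertices are left alone (their images are irrelevant in the formula below). -/
def fixedEmb (n k : ℕ) (i : Fin k → Fin n) : Fin n → Fin n :=
  fun v => if h : (v : ℕ) < k then i ⟨v, h⟩ else v

open Finset

lemma perm_extend_empty {n : ℕ} (s : Finset (Fin n)) (f : Fin n → Fin n)
    (hf : ¬ Set.InjOn f s) :
    (Finset.univ.filter (fun π : Equiv.Perm (Fin n) => ∀ x ∈ s, π x = f x)) = ∅ := by
  rw [Finset.filter_eq_empty_iff]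
  intro π _ h
  exact hf fun x hx y hy hxy =>
    π.injective (by rw [h x (Finset.mem_coe.mp hx), h y (Finset.mem_coe.mp hy), hxy])

lemma perm_extend_card_aux {n : ℕ} : ∀ m : ℕ, ∀ s : Finset (Fin n), ∀ f : Fin n → Fin n,
    Set.InjOn f s → n - s.card = m →
    (Finset.univ.filter (fun π : Equiv.Perm (Fin n) => ∀ x ∈ s, π x = f x)).card
      = m.factorial := by
  intro m
  induction m with
  | zero =>
    intro s f hf hn
    have hcard : s.card = n := by
      have h1 : s.card ≤ n := by
        simpa using Finset.card_le_card (Finset.subset_univ s)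
      omega
    have hs : s = Finset.univ := Finset.eq_univ_of_card s (by simpa using hcard)
    subst hs
    have hinj : Function.Injective f := fun a b hab => hf (by simp) (by simp) hab
    have hbij : Function.Bijective f := (Finite.injective_iff_bijective).mp hinj
    have : (Finset.univ.filter (fun π : Equiv.Perm (Fin n) => ∀ x ∈ Finset.univ, π x = f x))
        = {Equiv.ofBijective f hbij} := by
      ext π
      rw [Finset.mem_filter, Finset.mem_singleton]
      constructor
      · intro h; exact Equiv.ext fun x => h.2 x (Finset.mem_univ x)
      · rintro rfl; exact ⟨Finset.mem_univ _, fun x _ => rfl⟩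
    rw [this]
    simp
  | succ m ih =>
    intro s f hf hn
    have hxex : ∃ x, x ∉ s := by
      by_contra hcon
      push_neg at hcon
      have : s = Finset.univ := Finset.eq_univ_of_forall hcon
      subst this
      rw [Finset.card_univ, Fintype.card_fin, Nat.sub_self] at hn
      exact absurd hn (by omega)
    obtain ⟨x, hx⟩ := hxex
    rw [Finset.card_eq_sum_card_fiberwise
      (f := fun π : Equiv.Perm (Fin n) => π x) (t := Finset.univ) (fun _ _ => Finset.mem_univ _)]
    have key : ∀ y : Fin n,
        ((Finset.univ.filter (fun π : Equiv.Perm (Fin n) => ∀ z ∈ s, π z = f z)).filter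
          (fun π => π x = y)).card
        = if y ∈ s.image f then 0 else m.factorial := by
      intro y
      have hfilt : ((Finset.univ.filter (fun π : Equiv.Perm (Fin n) => ∀ z ∈ s, π z = f z)).filter
          (fun π => π x = y))
          = Finset.univ.filter
              (fun π : Equiv.Perm (Fin n) => ∀ z ∈ insert x s, π z = Function.update f x y z) := by
        rw [Finset.filter_filter]
        apply Finset.filter_congr
        intro π _
        constructor
        · rintro ⟨h1, h2⟩ z hz
          rcases Finset.mem_insert.mp hz with rfl | hzs
          · rw [Function.update_self]; exact h2
          · have hne : z ≠ x := fun hzx => hx (hzx ▸ hzs)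
            rw [Function.update_of_ne hne, h1 z hzs]
        · intro h
          refine ⟨fun z hz => ?_, ?_⟩
          · have hne : z ≠ x := fun hzx => hx (hzx ▸ hz)
            have := h z (Finset.mem_insert_of_mem hz)
            rwa [Function.update_of_ne hne] at this
          · have := h x (Finset.mem_insert_self x s)
            rwa [Function.update_self] at this
      rw [hfilt]
      by_cases hy : y ∈ s.image f
      · rw [if_pos hy]
        obtain ⟨z, hzs, hzf⟩ := Finset.mem_image.mp hy
        rw [perm_extend_empty]
        · simp
        · intro hinj
          have hne : z ≠ x := fun hzx => hx (hzx ▸ hzs)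
          have h1 : Function.update f x y x = Function.update f x y z := by
            rw [Function.update_self, Function.update_of_ne hne, hzf]
          have := hinj (Finset.mem_coe.mpr (Finset.mem_insert_self x s))
            (Finset.mem_coe.mpr (Finset.mem_insert_of_mem hzs)) h1
          exact hx (this ▸ hzs)
      · rw [if_neg hy]
        have hinj : Set.InjOn (Function.update f x y) (↑(insert x s) : Set (Fin n)) := by
          intro a ha b hb hab
          simp only [Finset.coe_insert, Set.mem_insert_iff, Finset.mem_coe] at ha hb
          rcases ha with rfl | ha <;> rcases hb with rfl | hb
          · rfl
          · exfalso
            have hne : b ≠ a := fun h => hx (h ▸ hb)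
            rw [Function.update_self, Function.update_of_ne hne] at hab
            exact hy (Finset.mem_image.mpr ⟨b, hb, hab.symm⟩)
          · exfalso
            have hne : a ≠ b := fun h => hx (h ▸ ha)
            rw [Function.update_self, Function.update_of_ne hne] at hab
            exact hy (Finset.mem_image.mpr ⟨a, ha, hab⟩)
          · have hnea : a ≠ x := fun h => hx (h ▸ ha)
            have hneb : b ≠ x := fun h => hx (h ▸ hb)
            rw [Function.update_of_ne hnea, Function.update_of_ne hneb] at hab
            exact hf ha hb hab
        have hcard : (insert x s).card = s.card + 1 := Finset.card_insert_of_notMem hx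
        have hm : n - (insert x s).card = m := by rw [hcard]; omega
        exact ih _ _ hinj hm
    calc ∑ y : Fin n, ((Finset.univ.filter
            (fun π : Equiv.Perm (Fin n) => ∀ z ∈ s, π z = f z)).filter
            (fun π => π x = y)).card
        = ∑ y : Fin n, (if y ∈ s.image f then 0 else m.factorial) :=
          Finset.sum_congr rfl (fun y _ => key y)
      _ = (s.image f)ᶜ.card * m.factorial := by
          rw [Finset.sum_ite, Finset.sum_const_zero, zero_add, Finset.sum_const, smul_eq_mul]
          congr 2
          ext y
          simp
      _ = (m + 1) * m.factorial := by
          rw [Finset.card_compl, Finset.card_image_of_injOn hf, Fintype.card_fin, hn]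
      _ = (m + 1).factorial := (Nat.factorial_succ m).symm

lemma perm_extend_card {n : ℕ} (s : Finset (Fin n)) (f : Fin n → Fin n)
    (hf : Set.InjOn f s) :
    (Finset.univ.filter (fun π : Equiv.Perm (Fin n) => ∀ x ∈ s, π x = f x)).card
      = (n - s.card).factorial :=
  perm_extend_card_aux (n - s.card) s f hf rfl


lemma sum_edge_double {n : ℕ} (G : SimpleGraph (Fin n)) [DecidableRel G.Adj]
    (h : Sym2 (Fin n) → ℝ) :
    ∑ p ∈ (Finset.univ ×ˢ Finset.univ).filter (fun p : Fin n × Fin n => G.Adj p.1 p.2),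
      h s(p.1, p.2) = 2 * ∑ e ∈ G.edgeFinset, h e := by
  have hmaps : ∀ p ∈ (Finset.univ ×ˢ Finset.univ).filter
      (fun p : Fin n × Fin n => G.Adj p.1 p.2), s(p.1, p.2) ∈ G.edgeFinset := by
    intro p hp
    rw [Finset.mem_filter] at hp
    exact SimpleGraph.mem_edgeFinset.mpr hp.2
  rw [← Finset.sum_fiberwise_of_maps_to hmaps (fun p => h s(p.1, p.2)), Finset.mul_sum]
  apply Finset.sum_congr rfl
  intro e he
  induction e using Sym2.ind with
  | _ a b =>
    have hadj : G.Adj a b := SimpleGraph.mem_edgeFinset.mp he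
    have hfib : (((Finset.univ ×ˢ Finset.univ).filter
        (fun p : Fin n × Fin n => G.Adj p.1 p.2)).filter
          (fun p => s(p.1, p.2) = s(a, b)))
        = ({(a, b), (b, a)} : Finset (Fin n × Fin n)) := by
      ext ⟨x, y⟩
      simp only [Finset.mem_filter, Finset.mem_product, Finset.mem_univ, true_and, and_true,
        Finset.mem_insert, Finset.mem_singleton, Sym2.eq_iff, Prod.mk.injEq]
      constructor
      · rintro ⟨hadj2, (⟨rfl, rfl⟩ | ⟨rfl, rfl⟩)⟩
        · exact Or.inl ⟨rfl, rfl⟩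
        · exact Or.inr ⟨rfl, rfl⟩
      · rintro (⟨rfl, rfl⟩ | ⟨rfl, rfl⟩)
        · exact ⟨hadj, Or.inl ⟨rfl, rfl⟩⟩
        · exact ⟨hadj.symm, Or.inr ⟨rfl, rfl⟩⟩
    rw [hfib, Finset.sum_insert (by simp [hadj.ne]), Finset.sum_singleton]
    show h s(a, b) + h s(b, a) = 2 * h s(a, b)
    rw [← Sym2.eq_swap (a := a)]
    ring

lemma pair_sum_lemma {n : ℕ} (B : Finset (Fin n)) (g : Fin n → Fin n → ℝ) :
    ∑ p ∈ (Finset.univ ×ˢ Finset.univ).filter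
        (fun p : Fin n × Fin n => p.1 ≠ p.2 ∧ p.1 ∈ B ∧ p.2 ∈ B), g p.1 p.2
      = ∑ x ∈ B, ∑ y ∈ B.erase x, g x y := by
  rw [Finset.sum_filter, Finset.sum_product]
  have hinner : ∀ x : Fin n,
      (∑ y : Fin n, if x ≠ y ∧ x ∈ B ∧ y ∈ B then g x y else 0)
        = if x ∈ B then ∑ y ∈ B.erase x, g x y else 0 := by
    intro x
    by_cases hx : x ∈ B
    · rw [if_pos hx]
      have : ∀ y : Fin n, (if x ≠ y ∧ x ∈ B ∧ y ∈ B then g x y else 0)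
          = if y ∈ B.erase x then g x y else 0 := by
        intro y
        congr 1
        simp only [Finset.mem_erase, eq_iff_iff]
        constructor
        · rintro ⟨h1, _, h3⟩; exact ⟨h1.symm, h3⟩
        · rintro ⟨h1, h2⟩; exact ⟨h1.symm, hx, h2⟩
      rw [Finset.sum_congr rfl (fun y _ => this y), Finset.sum_ite_mem, Finset.univ_inter]
    · rw [if_neg hx]
      apply Finset.sum_eq_zero
      intro y _
      rw [if_neg (by tauto)]
  rw [Finset.sum_congr rfl (fun x _ => hinner x), Finset.sum_ite_mem, Finset.univ_inter]



section

variable {n k : ℕ} (hk : k ≤ n) (i : Fin k → Fin n)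

lemma fixedEmb_castLE (j : Fin k) : fixedEmb n k i (Fin.castLE hk j) = i j := by
  simp only [fixedEmb, Fin.coe_castLE, j.isLt, dif_pos]

lemma mem_S0_iff {x : Fin n} :
    x ∈ Finset.univ.image (Fin.castLE hk) ↔ (x : ℕ) < k := by
  simp only [Finset.mem_image, Finset.mem_univ, true_and]
  constructor
  · rintro ⟨j, rfl⟩; exact j.isLt
  · intro hx; exact ⟨⟨x, hx⟩, Fin.ext rfl⟩

lemma card_S0 : (Finset.univ.image (Fin.castLE hk)).card = k := by
  rw [Finset.card_image_of_injective _ (Fin.castLE_injective hk), Finset.card_univ,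
    Fintype.card_fin]

lemma P_canon :
    Finset.univ.filter
        (fun π : Equiv.Perm (Fin n) => ∀ j : Fin k, π (Fin.castLE hk j) = i j)
      = Finset.univ.filter
        (fun π : Equiv.Perm (Fin n) =>
          ∀ x ∈ Finset.univ.image (Fin.castLE hk), π x = fixedEmb n k i x) := by
  apply Finset.filter_congr
  intro π _
  constructor
  · intro h x hx
    obtain ⟨j, _, rfl⟩ := Finset.mem_image.mp hx
    rw [fixedEmb_castLE hk i j]; exact h j
  · intro h j
    have := h (Fin.castLE hk j) (Finset.mem_image.mpr ⟨j, Finset.mem_univ _, rfl⟩)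
    rwa [fixedEmb_castLE] at this

lemma f0_injOn (hi : Function.Injective i) : Set.InjOn (fixedEmb n k i) (Finset.univ.image (Fin.castLE hk)) := by
  intro a ha b hb hab
  obtain ⟨ja, _, rfl⟩ := Finset.mem_image.mp (Finset.mem_coe.mp ha)
  obtain ⟨jb, _, rfl⟩ := Finset.mem_image.mp (Finset.mem_coe.mp hb)
  rw [fixedEmb_castLE, fixedEmb_castLE] at hab
  rw [hi hab]

lemma Pcard (hi : Function.Injective i) :
    (Finset.univ.filter
        (fun π : Equiv.Perm (Fin n) => ∀ j : Fin k, π (Fin.castLE hk j) = i j)).card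
      = (n - k).factorial := by
  rw [P_canon, perm_extend_card _ _ (f0_injOn hk i hi), card_S0]

lemma f0_mem_image {x : Fin n} (hx : x ∈ Finset.univ.image (Fin.castLE hk)) :
    fixedEmb n k i x ∈ Finset.image i Finset.univ := by
  obtain ⟨j, _, rfl⟩ := Finset.mem_image.mp hx
  rw [fixedEmb_castLE]
  exact Finset.mem_image.mpr ⟨j, Finset.mem_univ _, rfl⟩

lemma P_apply_lt (π : Equiv.Perm (Fin n))
    (hπ : π ∈ Finset.univ.filter
      (fun π : Equiv.Perm (Fin n) => ∀ j : Fin k, π (Fin.castLE hk j) = i j))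
    (v : Fin n) (hv : (v : ℕ) < k) : π v = fixedEmb n k i v := by
  have h := (Finset.mem_filter.mp hπ).2 ⟨v, hv⟩
  have hcast : Fin.castLE hk (⟨(v : ℕ), hv⟩ : Fin k) = v := Fin.ext rfl
  rw [hcast] at h
  rw [h, fixedEmb, dif_pos hv]

lemma L2 (hi : Function.Injective i) (b : Fin n) (hb : k ≤ (b : ℕ)) (g : Fin n → ℝ) :
    ∑ π ∈ Finset.univ.filter
        (fun π : Equiv.Perm (Fin n) => ∀ j : Fin k, π (Fin.castLE hk j) = i j), g (π b)
      = ((n - k - 1).factorial : ℝ) *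
          ∑ y ∈ Finset.univ \ Finset.image i Finset.univ, g y := by
  classical
  set S0 := Finset.univ.image (Fin.castLE hk) with hS0
  set f0 := fixedEmb n k i with hf0
  have hbS0 : b ∉ S0 := by rw [hS0, mem_S0_iff]; omega
  have hfib := Finset.sum_fiberwise
    (Finset.univ.filter
      (fun π : Equiv.Perm (Fin n) => ∀ j : Fin k, π (Fin.castLE hk j) = i j))
    (fun π => π b) (fun π => g (π b))
  rw [← hfib]
  have hstep : ∀ y : Fin n,
      (∑ π ∈ (Finset.univ.filter
          (fun π : Equiv.Perm (Fin n) => ∀ j : Fin k, π (Fin.castLE hk j) = i j)).filter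
          (fun π => π b = y), g (π b))
        = (if y ∈ Finset.univ \ Finset.image i Finset.univ
            then ((n - k - 1).factorial : ℝ) else 0) * g y := by
    intro y
    have hcanon : ((Finset.univ.filter
          (fun π : Equiv.Perm (Fin n) => ∀ j : Fin k, π (Fin.castLE hk j) = i j)).filter
          (fun π => π b = y))
        = Finset.univ.filter (fun π : Equiv.Perm (Fin n) =>
            ∀ z ∈ insert b S0, π z = Function.update f0 b y z) := by
      rw [P_canon, Finset.filter_filter]
      apply Finset.filter_congr
      intro π _
      constructor
      · rintro ⟨h1, h2⟩ z hz
        rcases Finset.mem_insert.mp hz with rfl | hzs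
        · rw [Function.update_self]; exact h2
        · have hne : z ≠ b := fun hzx => hbS0 (hzx ▸ hzs)
          rw [Function.update_of_ne hne]; exact h1 z hzs
      · intro h
        refine ⟨fun z hz => ?_, ?_⟩
        · have hne : z ≠ b := fun hzx => hbS0 (hzx ▸ hz)
          have := h z (Finset.mem_insert_of_mem hz)
          rwa [Function.update_of_ne hne] at this
        · have := h b (Finset.mem_insert_self b S0)
          rwa [Function.update_self] at this
    have hsum : (∑ π ∈ (Finset.univ.filter
          (fun π : Equiv.Perm (Fin n) => ∀ j : Fin k, π (Fin.castLE hk j) = i j)).filter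
          (fun π => π b = y), g (π b))
        = (((Finset.univ.filter
          (fun π : Equiv.Perm (Fin n) => ∀ j : Fin k, π (Fin.castLE hk j) = i j)).filter
          (fun π => π b = y)).card : ℝ) * g y := by
      rw [Finset.sum_congr rfl (fun π hπ => by rw [(Finset.mem_filter.mp hπ).2]),
        Finset.sum_const, nsmul_eq_mul]
    rw [hsum, hcanon]
    by_cases hy : y ∈ Finset.image i Finset.univ
    · rw [if_neg (by simp [hy]), perm_extend_empty]
      · simp
      · intro hinj
        obtain ⟨j, _, hj⟩ := Finset.mem_image.mp hy
        have hjb : Fin.castLE hk j ≠ b := by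
          intro h
          have := mem_S0_iff hk (x := Fin.castLE hk j)
          rw [h] at this
          have : (b : ℕ) < k := this.mp (by rw [← h]; exact Finset.mem_image.mpr ⟨j, Finset.mem_univ _, rfl⟩)
          omega
        have h1 : Function.update f0 b y b = Function.update f0 b y (Fin.castLE hk j) := by
          rw [Function.update_self, Function.update_of_ne hjb, hf0, fixedEmb_castLE, hj]
        have hmem : Fin.castLE hk j ∈ S0 := Finset.mem_image.mpr ⟨j, Finset.mem_univ _, rfl⟩
        have := hinj (Finset.mem_coe.mpr (Finset.mem_insert_self b S0))
          (Finset.mem_coe.mpr (Finset.mem_insert_of_mem hmem)) h1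
        exact hjb this.symm
    · rw [if_pos (by simp [hy])]
      have hinj : Set.InjOn (Function.update f0 b y) (↑(insert b S0) : Set (Fin n)) := by
        intro p hp q hq hpq
        simp only [Finset.coe_insert, Set.mem_insert_iff, Finset.mem_coe] at hp hq
        rcases hp with rfl | hp <;> rcases hq with rfl | hq
        · rfl
        · exfalso
          have hne : q ≠ p := fun h => hbS0 (h ▸ hq)
          rw [Function.update_self, Function.update_of_ne hne] at hpq
          exact hy (hpq ▸ f0_mem_image hk i hq)
        · exfalso
          have hne : p ≠ q := fun h => hbS0 (h ▸ hp)
          rw [Function.update_self, Function.update_of_ne hne] at hpq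
          exact hy (hpq.symm ▸ f0_mem_image hk i hp)
        · have hnep : p ≠ b := fun h => hbS0 (h ▸ hp)
          have hneq : q ≠ b := fun h => hbS0 (h ▸ hq)
          rw [Function.update_of_ne hnep, Function.update_of_ne hneq] at hpq
          exact f0_injOn hk i hi hp hq hpq
      rw [perm_extend_card _ _ hinj, Finset.card_insert_of_notMem hbS0, card_S0,
        Nat.sub_sub]
  rw [Finset.sum_congr rfl (fun y _ => hstep y)]
  simp only [ite_mul, zero_mul]
  rw [Finset.sum_ite_mem, Finset.univ_inter, ← Finset.mul_sum]

lemma L3 (hi : Function.Injective i) (a b : Fin n) (ha : k ≤ (a : ℕ)) (hb : k ≤ (b : ℕ))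
    (hab : a ≠ b) (g : Fin n → Fin n → ℝ) :
    ∑ π ∈ Finset.univ.filter
        (fun π : Equiv.Perm (Fin n) => ∀ j : Fin k, π (Fin.castLE hk j) = i j), g (π a) (π b)
      = ((n - k - 2).factorial : ℝ) *
          ∑ x ∈ Finset.univ \ Finset.image i Finset.univ,
            ∑ y ∈ (Finset.univ \ Finset.image i Finset.univ).erase x, g x y := by
  classical
  set S0 := Finset.univ.image (Fin.castLE hk) with hS0
  set f0 := fixedEmb n k i with hf0
  set B := Finset.univ \ Finset.image i Finset.univ with hB
  have haS0 : a ∉ S0 := by rw [hS0, mem_S0_iff]; omega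
  have hbS0 : b ∉ S0 := by rw [hS0, mem_S0_iff]; omega
  have hfib := Finset.sum_fiberwise
    (Finset.univ.filter
      (fun π : Equiv.Perm (Fin n) => ∀ j : Fin k, π (Fin.castLE hk j) = i j))
    (fun π => (π a, π b)) (fun π => g (π a) (π b))
  rw [← hfib]
  have hstep : ∀ p : Fin n × Fin n,
      (∑ π ∈ (Finset.univ.filter
          (fun π : Equiv.Perm (Fin n) => ∀ j : Fin k, π (Fin.castLE hk j) = i j)).filter
          (fun π => (π a, π b) = p), g (π a) (π b))
        = (if p.1 ≠ p.2 ∧ p.1 ∈ B ∧ p.2 ∈ B then ((n - k - 2).factorial : ℝ) else 0)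
            * g p.1 p.2 := by
    rintro ⟨x, y⟩
    dsimp only
    have hsum : (∑ π ∈ (Finset.univ.filter
          (fun π : Equiv.Perm (Fin n) => ∀ j : Fin k, π (Fin.castLE hk j) = i j)).filter
          (fun π => (π a, π b) = (x, y)), g (π a) (π b))
        = (((Finset.univ.filter
          (fun π : Equiv.Perm (Fin n) => ∀ j : Fin k, π (Fin.castLE hk j) = i j)).filter
          (fun π => (π a, π b) = (x, y))).card : ℝ) * g x y := by
      have hconst : ∀ π ∈ ((Finset.univ.filter
          (fun π : Equiv.Perm (Fin n) => ∀ j : Fin k, π (Fin.castLE hk j) = i j)).filter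
          (fun π => (π a, π b) = (x, y))), g (π a) (π b) = g x y := by
        intro π hπ
        have h2 := (Finset.mem_filter.mp hπ).2
        rw [Prod.mk.injEq] at h2
        rw [h2.1, h2.2]
      rw [Finset.sum_eq_card_nsmul hconst, nsmul_eq_mul]
    rw [hsum]
    set f2 := Function.update (Function.update f0 b y) a x with hf2
    have hf2a : f2 a = x := Function.update_self _ _ _
    have hf2b : f2 b = y := by
      rw [hf2, Function.update_of_ne (Ne.symm hab), Function.update_self]
    have hf2S0 : ∀ z ∈ S0, f2 z = f0 z := by
      intro z hz
      have hza : z ≠ a := fun h => haS0 (h ▸ hz)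
      have hzb : z ≠ b := fun h => hbS0 (h ▸ hz)
      rw [hf2, Function.update_of_ne hza, Function.update_of_ne hzb]
    have hcanon : ((Finset.univ.filter
          (fun π : Equiv.Perm (Fin n) => ∀ j : Fin k, π (Fin.castLE hk j) = i j)).filter
          (fun π => (π a, π b) = (x, y)))
        = Finset.univ.filter (fun π : Equiv.Perm (Fin n) =>
            ∀ z ∈ insert a (insert b S0), π z = f2 z) := by
      rw [P_canon, Finset.filter_filter]
      apply Finset.filter_congr
      intro π _
      constructor
      · rintro ⟨h1, h2⟩ z hz
        rw [Prod.mk.injEq] at h2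
        rcases Finset.mem_insert.mp hz with rfl | hz2
        · rw [hf2a]; exact h2.1
        · rcases Finset.mem_insert.mp hz2 with rfl | hz3
          · rw [hf2b]; exact h2.2
          · rw [hf2S0 z hz3]; exact h1 z hz3
      · intro h
        refine ⟨fun z hz => ?_, ?_⟩
        · have := h z (Finset.mem_insert_of_mem (Finset.mem_insert_of_mem hz))
          rwa [hf2S0 z hz] at this
        · have h1 := h a (Finset.mem_insert_self _ _)
          have h2 := h b (Finset.mem_insert_of_mem (Finset.mem_insert_self _ _))
          rw [hf2a] at h1
          rw [hf2b] at h2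
          rw [Prod.mk.injEq]
          exact ⟨h1, h2⟩
    rw [hcanon]
    have hmemB : ∀ w : Fin n, w ∈ B ↔ w ∉ Finset.image i Finset.univ := by
      intro w; rw [hB, Finset.mem_sdiff]; simp
    by_cases hcond : x ≠ y ∧ x ∈ B ∧ y ∈ B
    · rw [if_pos hcond]
      obtain ⟨hxy, hxB, hyB⟩ := hcond
      rw [hmemB] at hxB hyB
      have hinj : Set.InjOn f2 (↑(insert a (insert b S0)) : Set (Fin n)) := by
        have hval : ∀ z ∈ insert a (insert b S0), (f2 z = x ∧ z = a) ∨ (f2 z = y ∧ z = b) ∨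
            (f2 z ∈ Finset.image i Finset.univ ∧ z ∈ S0) := by
          intro z hz
          rcases Finset.mem_insert.mp hz with rfl | hz2
          · exact Or.inl ⟨hf2a, rfl⟩
          · rcases Finset.mem_insert.mp hz2 with rfl | hz3
            · exact Or.inr (Or.inl ⟨hf2b, rfl⟩)
            · exact Or.inr (Or.inr ⟨by rw [hf2S0 z hz3]; exact f0_mem_image hk i hz3, hz3⟩)
        intro p hp q hq hpq
        rw [Finset.mem_coe] at hp hq
        rcases hval p hp with ⟨hp1, rfl⟩ | ⟨hp1, rfl⟩ | ⟨hp1, hp2⟩ <;>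
          rcases hval q hq with ⟨hq1, rfl⟩ | ⟨hq1, rfl⟩ | ⟨hq1, hq2⟩
        · rfl
        · exact absurd (hp1 ▸ hq1 ▸ hpq) hxy
        · exfalso; rw [← hpq, hp1] at hq1; exact hxB hq1
        · exact absurd (hq1 ▸ hp1 ▸ hpq.symm) hxy
        · rfl
        · exfalso; rw [← hpq, hp1] at hq1; exact hyB hq1
        · exfalso; rw [hpq, hq1] at hp1; exact hxB hp1
        · exfalso; rw [hpq, hq1] at hp1; exact hyB hp1
        · rw [hf2S0 p hp2, hf2S0 q hq2] at hpq
          exact f0_injOn hk i hi hp2 hq2 hpq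
      rw [perm_extend_card _ _ hinj, Finset.card_insert_of_notMem (by
          intro hmem
          rcases Finset.mem_insert.mp hmem with h | h
          · exact hab h
          · exact haS0 h),
        Finset.card_insert_of_notMem hbS0, card_S0]
      have hnk : n - (k + 1 + 1) = n - k - 2 := by omega
      rw [hnk]
    · rw [if_neg hcond, zero_mul]
      rw [perm_extend_empty]
      · simp
      · intro hinj
        apply hcond
        have hxmem : x ∉ Finset.image i Finset.univ := by
          intro hx
          obtain ⟨j, _, hj⟩ := Finset.mem_image.mp hx
          have hjS0 : Fin.castLE hk j ∈ S0 := Finset.mem_image.mpr ⟨j, Finset.mem_univ _, rfl⟩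
          have hja : Fin.castLE hk j ≠ a := fun h => haS0 (h ▸ hjS0)
          have h1 : f2 a = f2 (Fin.castLE hk j) := by
            rw [hf2a, hf2S0 _ hjS0, hf0, fixedEmb_castLE, hj]
          exact hja (hinj (Finset.mem_coe.mpr (Finset.mem_insert_self _ _))
            (Finset.mem_coe.mpr (Finset.mem_insert_of_mem (Finset.mem_insert_of_mem hjS0)))
            h1).symm
        have hymem : y ∉ Finset.image i Finset.univ := by
          intro hy
          obtain ⟨j, _, hj⟩ := Finset.mem_image.mp hy
          have hjS0 : Fin.castLE hk j ∈ S0 := Finset.mem_image.mpr ⟨j, Finset.mem_univ _, rfl⟩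
          have hjb : Fin.castLE hk j ≠ b := fun h => hbS0 (h ▸ hjS0)
          have h1 : f2 b = f2 (Fin.castLE hk j) := by
            rw [hf2b, hf2S0 _ hjS0, hf0, fixedEmb_castLE, hj]
          exact hjb (hinj
            (Finset.mem_coe.mpr (Finset.mem_insert_of_mem (Finset.mem_insert_self _ _)))
            (Finset.mem_coe.mpr (Finset.mem_insert_of_mem (Finset.mem_insert_of_mem hjS0)))
            h1).symm
        have hxyne : x ≠ y := by
          intro h
          have h1 : f2 a = f2 b := by rw [hf2a, hf2b, h]
          exact hab (hinj (Finset.mem_coe.mpr (Finset.mem_insert_self _ _))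
            (Finset.mem_coe.mpr (Finset.mem_insert_of_mem (Finset.mem_insert_self _ _))) h1)
        exact ⟨hxyne, (hmemB x).mpr hxmem, (hmemB y).mpr hymem⟩
  rw [Finset.sum_congr rfl (fun p _ => hstep p)]
  have huniv : (Finset.univ : Finset (Fin n × Fin n)) = Finset.univ ×ˢ Finset.univ := by
    rw [Finset.univ_product_univ]
  rw [huniv]
  simp only [ite_mul, zero_mul]
  rw [← Finset.sum_filter (fun p : Fin n × Fin n => p.1 ≠ p.2 ∧ p.1 ∈ B ∧ p.2 ∈ B)
    (fun p : Fin n × Fin n => ((n - k - 2).factorial : ℝ) * g p.1 p.2)]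
  rw [pair_sum_lemma B (fun x y => ((n - k - 2).factorial : ℝ) * g x y)]
  rw [Finset.mul_sum]
  apply Finset.sum_congr rfl
  intro x _
  rw [Finset.mul_sum]

end


/-- The explicit formula for the conditional expectation
`E[c(E(F_π)) ∣ (π(1), …, π(k)) = (i₁, …, i_k)]`: it equals
`c(F_π[{i₁,…,i_k}]) + ∑_{j=1}^k c̄({i_j ℓ : ℓ ∉ {i₁,…,i_k}})·|N_F(j) \ [k]|`
`+ c̄(K_n − {i₁,…,i_k})·m(F − [k])`. -/
theorem conditional_expectation_formula (n k : ℕ) (hk : k ≤ n)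
    (c : Sym2 (Fin n) → ℝ)
    (hc : ∀ e ∈ (⊤ : SimpleGraph (Fin n)).edgeFinset, c e = 1 ∨ c e = -1)
    (F : SimpleGraph (Fin n)) [DecidableRel F.Adj] (hF : F.IsAcyclic)
    (i : Fin k → Fin n) (hi : Function.Injective i) :
    (1 / ((n - k).factorial : ℝ)) *
      ∑ π ∈ Finset.univ.filter
          (fun π : Equiv.Perm (Fin n) => ∀ j : Fin k, π (Fin.castLE hk j) = i j),
        ∑ e ∈ F.edgeFinset, c (e.map π)
    =
    (∑ e ∈ F.edgeFinset.filter
        (fun e => ∀ v : Fin n, v ∈ e → (v : ℕ) < k), c (e.map (fixedEmb n k i)))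
    + (∑ j : Fin k,
        ((∑ ℓ ∈ Finset.univ \ Finset.image i Finset.univ, c s(i j, ℓ)) /
            ((Finset.univ \ Finset.image i Finset.univ).card : ℝ)) *
          (((F.neighborFinset (Fin.castLE hk j)).filter
              (fun v : Fin n => k ≤ (v : ℕ))).card : ℝ))
    + ((∑ e ∈ (⊤ : SimpleGraph (Fin n)).edgeFinset.filter
            (fun e => ∀ v : Fin n, v ∈ e → v ∈ Finset.univ \ Finset.image i Finset.univ), c e) /
          (((n - k).choose 2 : ℕ) : ℝ)) *
        ((F.edgeFinset.filter
            (fun e => ∀ v : Fin n, v ∈ e → k ≤ (v : ℕ))).card : ℝ) := by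
  classical
  have hQ0 : ((n - k).factorial : ℝ) ≠ 0 := Nat.cast_ne_zero.mpr (Nat.factorial_ne_zero _)
  have hBcard : (Finset.univ \ Finset.image i Finset.univ).card = n - k := by
    rw [Finset.card_sdiff_of_subset (Finset.subset_univ _), Finset.card_univ, Fintype.card_fin,
      Finset.card_image_of_injective _ hi, Finset.card_univ, Fintype.card_fin]
  -- the four evaluations
  have eTT : (∑ p ∈ ((((Finset.univ ×ˢ Finset.univ).filter (fun p : Fin n × Fin n => F.Adj p.1 p.2)).filter (fun p : Fin n × Fin n => (p.1 : ℕ) < k)).filter (fun p : Fin n × Fin n => (p.2 : ℕ) < k)), ∑ π ∈ (Finset.univ.filter (fun π : Equiv.Perm (Fin n) => ∀ j : Fin k, π (Fin.castLE hk j) = i j)), c s(π p.1, π p.2)) = ((n - k).factorial : ℝ) * (2 * (∑ e ∈ F.edgeFinset.filter (fun e => ∀ v : Fin n, v ∈ e → (v : ℕ) < k), c (e.map (fixedEmb n k i)))) := by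
    have h1 : ∀ p ∈ ((((Finset.univ ×ˢ Finset.univ).filter (fun p : Fin n × Fin n => F.Adj p.1 p.2)).filter (fun p : Fin n × Fin n => (p.1 : ℕ) < k)).filter (fun p : Fin n × Fin n => (p.2 : ℕ) < k)), (∑ π ∈ (Finset.univ.filter (fun π : Equiv.Perm (Fin n) => ∀ j : Fin k, π (Fin.castLE hk j) = i j)), c s(π p.1, π p.2)) = ((n - k).factorial : ℝ) * c s(fixedEmb n k i p.1, fixedEmb n k i p.2) := by
      intro p hp
      have hp2 : (p.2 : ℕ) < k := (Finset.mem_filter.mp hp).2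
      have hp1 : (p.1 : ℕ) < k := (Finset.mem_filter.mp (Finset.mem_filter.mp hp).1).2
      have hconst : ∀ π ∈ (Finset.univ.filter (fun π : Equiv.Perm (Fin n) => ∀ j : Fin k, π (Fin.castLE hk j) = i j)), c s(π p.1, π p.2) = c s(fixedEmb n k i p.1, fixedEmb n k i p.2) := by
        intro π hπ
        rw [P_apply_lt hk i π hπ p.1 hp1, P_apply_lt hk i π hπ p.2 hp2]
      rw [Finset.sum_eq_card_nsmul hconst, Pcard hk i hi, nsmul_eq_mul]
    rw [Finset.sum_congr rfl h1, ← Finset.mul_sum]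
    congr 1
    have h2 := sum_edge_double F (fun e => if ∀ v ∈ e, (v : ℕ) < k then c (e.map (fixedEmb n k i)) else 0)
    calc ∑ p ∈ ((((Finset.univ ×ˢ Finset.univ).filter (fun p : Fin n × Fin n => F.Adj p.1 p.2)).filter (fun p : Fin n × Fin n => (p.1 : ℕ) < k)).filter (fun p : Fin n × Fin n => (p.2 : ℕ) < k)), c s(fixedEmb n k i p.1, fixedEmb n k i p.2)
        = ∑ p ∈ ((Finset.univ ×ˢ Finset.univ).filter (fun p : Fin n × Fin n => F.Adj p.1 p.2)), if (p.1 : ℕ) < k ∧ (p.2 : ℕ) < k then c s(fixedEmb n k i p.1, fixedEmb n k i p.2) else 0 := by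
          rw [Finset.filter_filter, Finset.sum_filter]
      _ = ∑ p ∈ ((Finset.univ ×ˢ Finset.univ).filter (fun p : Fin n × Fin n => F.Adj p.1 p.2)), (if ∀ v ∈ s(p.1, p.2), (v : ℕ) < k then c (s(p.1, p.2).map (fixedEmb n k i)) else 0) := by
          apply Finset.sum_congr rfl
          intro p _
          simp only [Sym2.ball, Sym2.map_pair_eq]
      _ = 2 * ∑ e ∈ F.edgeFinset, (if ∀ v ∈ e, (v : ℕ) < k then c (e.map (fixedEmb n k i)) else 0) := h2
      _ = 2 * (∑ e ∈ F.edgeFinset.filter (fun e => ∀ v : Fin n, v ∈ e → (v : ℕ) < k), c (e.map (fixedEmb n k i))) := by rw [← Finset.sum_filter]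
  have eTF : (∑ p ∈ ((((Finset.univ ×ˢ Finset.univ).filter (fun p : Fin n × Fin n => F.Adj p.1 p.2)).filter (fun p : Fin n × Fin n => (p.1 : ℕ) < k)).filter (fun p : Fin n × Fin n => ¬ (p.2 : ℕ) < k)), ∑ π ∈ (Finset.univ.filter (fun π : Equiv.Perm (Fin n) => ∀ j : Fin k, π (Fin.castLE hk j) = i j)), c s(π p.1, π p.2)) = ((n - k).factorial : ℝ) * (∑ j : Fin k, ((∑ ℓ ∈ Finset.univ \ Finset.image i Finset.univ, c s(i j, ℓ)) / (((Finset.univ \ Finset.image i Finset.univ).card : ℝ))) * (((F.neighborFinset (Fin.castLE hk j)).filter (fun v : Fin n => k ≤ (v : ℕ))).card : ℝ)) := by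
    have hinner : ∀ p ∈ ((((Finset.univ ×ˢ Finset.univ).filter (fun p : Fin n × Fin n => F.Adj p.1 p.2)).filter (fun p : Fin n × Fin n => (p.1 : ℕ) < k)).filter (fun p : Fin n × Fin n => ¬ (p.2 : ℕ) < k)), (∑ π ∈ (Finset.univ.filter (fun π : Equiv.Perm (Fin n) => ∀ j : Fin k, π (Fin.castLE hk j) = i j)), c s(π p.1, π p.2)) = ((n - k - 1).factorial : ℝ) * ∑ y ∈ (Finset.univ \ Finset.image i Finset.univ), c s(fixedEmb n k i p.1, y) := by
      intro p hp
      have hp2 : ¬ (p.2 : ℕ) < k := (Finset.mem_filter.mp hp).2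
      have hp1 : (p.1 : ℕ) < k := (Finset.mem_filter.mp (Finset.mem_filter.mp hp).1).2
      have hc1 : ∀ π ∈ (Finset.univ.filter (fun π : Equiv.Perm (Fin n) => ∀ j : Fin k, π (Fin.castLE hk j) = i j)), c s(π p.1, π p.2) = c s(fixedEmb n k i p.1, π p.2) := by
        intro π hπ
        rw [P_apply_lt hk i π hπ p.1 hp1]
      rw [Finset.sum_congr rfl hc1]
      exact L2 hk i hi p.2 (not_lt.mp hp2) (fun y => c s(fixedEmb n k i p.1, y))
    rw [Finset.sum_congr rfl hinner, Finset.filter_filter, Finset.filter_filter,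
      Finset.sum_filter, Finset.sum_product]
    have hrow : ∀ a : Fin n,
        (∑ b : Fin n, if F.Adj a b ∧ ((a : ℕ) < k ∧ ¬ (b : ℕ) < k) then
            ((n - k - 1).factorial : ℝ) * ∑ y ∈ (Finset.univ \ Finset.image i Finset.univ), c s(fixedEmb n k i a, y) else 0)
          = if (a : ℕ) < k then
              (((F.neighborFinset a).filter (fun v : Fin n => k ≤ (v : ℕ))).card : ℝ) *
                (((n - k - 1).factorial : ℝ) * ∑ y ∈ (Finset.univ \ Finset.image i Finset.univ), c s(fixedEmb n k i a, y)) else 0 := by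
      intro a
      by_cases ha : (a : ℕ) < k
      · rw [if_pos ha]
        have hcond : ∀ b : Fin n, (F.Adj a b ∧ ((a : ℕ) < k ∧ ¬ (b : ℕ) < k)) ↔
            b ∈ (F.neighborFinset a).filter (fun v : Fin n => k ≤ (v : ℕ)) := by
          intro b
          rw [Finset.mem_filter, SimpleGraph.mem_neighborFinset]
          constructor
          · rintro ⟨h1, _, h3⟩; exact ⟨h1, not_lt.mp h3⟩
          · rintro ⟨h1, h2⟩; exact ⟨h1, ha, not_lt.mpr h2⟩
        rw [Finset.sum_congr rfl (fun b _ => if_congr (hcond b) rfl rfl),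
          Finset.sum_ite_mem, Finset.univ_inter, Finset.sum_const, nsmul_eq_mul]
      · rw [if_neg ha]
        apply Finset.sum_eq_zero
        intro b _
        rw [if_neg (by tauto)]
    rw [Finset.sum_congr rfl (fun a (_ : a ∈ Finset.univ) => hrow a), ← Finset.sum_filter]
    have himg : Finset.univ.filter (fun a : Fin n => (a : ℕ) < k)
        = Finset.univ.image (Fin.castLE hk) := by
      ext x
      rw [Finset.mem_filter, mem_S0_iff hk]
      simp
    rw [himg, Finset.sum_image (fun x _ y _ h => Fin.castLE_injective hk h), Finset.mul_sum]
    apply Finset.sum_congr rfl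
    intro j _
    simp only [fixedEmb_castLE hk i]
    rw [hBcard]
    by_cases hkn : k < n
    · have hfac : (n - k).factorial = (n - k) * (n - k - 1).factorial := by
        set a := n - k - 1 with ha
        rw [show n - k = a + 1 by omega, Nat.factorial_succ]
      have hnk0 : ((n - k : ℕ) : ℝ) ≠ 0 := Nat.cast_ne_zero.mpr (by omega)
      have harith : ∀ d C S : ℝ, d * (C * S) = ((n - k : ℕ) : ℝ) * C * (S / ((n - k : ℕ) : ℝ) * d) := by
        intro d C S
        have hcancel : ((n - k : ℕ) : ℝ) * ((n - k : ℕ) : ℝ)⁻¹ = 1 := mul_inv_cancel₀ hnk0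
        rw [div_eq_mul_inv]
        linear_combination (-(C * S * d)) * hcancel
      rw [hfac, Nat.cast_mul]
      exact harith _ _ _
    · have hd0 : ((F.neighborFinset (Fin.castLE hk j)).filter
          (fun v : Fin n => k ≤ (v : ℕ))).card = 0 := by
        rw [Finset.card_eq_zero, Finset.filter_eq_empty_iff]
        intro v _
        have hv := v.isLt
        omega
      rw [hd0]
      norm_num
  have eFT : (∑ p ∈ ((((Finset.univ ×ˢ Finset.univ).filter (fun p : Fin n × Fin n => F.Adj p.1 p.2)).filter (fun p : Fin n × Fin n => ¬ (p.1 : ℕ) < k)).filter (fun p : Fin n × Fin n => (p.2 : ℕ) < k)), ∑ π ∈ (Finset.univ.filter (fun π : Equiv.Perm (Fin n) => ∀ j : Fin k, π (Fin.castLE hk j) = i j)), c s(π p.1, π p.2)) = ∑ p ∈ ((((Finset.univ ×ˢ Finset.univ).filter (fun p : Fin n × Fin n => F.Adj p.1 p.2)).filter (fun p : Fin n × Fin n => (p.1 : ℕ) < k)).filter (fun p : Fin n × Fin n => ¬ (p.2 : ℕ) < k)), ∑ π ∈ (Finset.univ.filter (fun π : Equiv.Perm (Fin n) => ∀ j : Fin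 k, π (Fin.castLE hk j) = i j)), c s(π p.1, π p.2) := by
    apply Finset.sum_nbij' (fun p : Fin n × Fin n => p.swap) (fun p : Fin n × Fin n => p.swap)
    · intro p hp
      have h0 := Finset.mem_filter.mp hp
      have h1 := Finset.mem_filter.mp h0.1
      have h2 := Finset.mem_filter.mp h1.1
      exact Finset.mem_filter.mpr ⟨Finset.mem_filter.mpr ⟨Finset.mem_filter.mpr
        ⟨Finset.mem_product.mpr ⟨Finset.mem_univ _, Finset.mem_univ _⟩, h2.2.symm⟩, h0.2⟩, h1.2⟩
    · intro p hp
      have h0 := Finset.mem_filter.mp hp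
      have h1 := Finset.mem_filter.mp h0.1
      have h2 := Finset.mem_filter.mp h1.1
      exact Finset.mem_filter.mpr ⟨Finset.mem_filter.mpr ⟨Finset.mem_filter.mpr
        ⟨Finset.mem_product.mpr ⟨Finset.mem_univ _, Finset.mem_univ _⟩, h2.2.symm⟩, h0.2⟩, h1.2⟩
    · intro p _; exact Prod.swap_swap p
    · intro p _; exact Prod.swap_swap p
    · intro p _
      apply Finset.sum_congr rfl
      intro π _
      exact congrArg c Sym2.eq_swap
  have eFF : (∑ p ∈ ((((Finset.univ ×ˢ Finset.univ).filter (fun p : Fin n × Fin n => F.Adj p.1 p.2)).filter (fun p : Fin n × Fin n => ¬ (p.1 : ℕ) < k)).filter (fun p : Fin n × Fin n => ¬ (p.2 : ℕ) < k)), ∑ π ∈ (Finset.univ.filter (fun π : Equiv.Perm (Fin n) => ∀ j : Fin k, π (Fin.castLE hk j) = i j)), c s(π p.1, π p.2)) = 2 * (((n - k).factorial : ℝ) * (((∑ e ∈ (⊤ : SimpleGraph (Fin n)).edgeFinset.filter (fun e => ∀ v : Fin n, v ∈ e → v ∈ Finset.univ \ Finset.image i Finset.univ), c e) / (((n - k).choose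 2 : ℕ) : ℝ)) * ((F.edgeFinset.filter (fun e => ∀ v : Fin n, v ∈ e → k ≤ (v : ℕ))).card : ℝ))) := by
    have hinner : ∀ p ∈ ((((Finset.univ ×ˢ Finset.univ).filter (fun p : Fin n × Fin n => F.Adj p.1 p.2)).filter (fun p : Fin n × Fin n => ¬ (p.1 : ℕ) < k)).filter (fun p : Fin n × Fin n => ¬ (p.2 : ℕ) < k)), (∑ π ∈ (Finset.univ.filter (fun π : Equiv.Perm (Fin n) => ∀ j : Fin k, π (Fin.castLE hk j) = i j)), c s(π p.1, π p.2)) = ((n - k - 2).factorial : ℝ) * (∑ x ∈ (Finset.univ \ Finset.image i Finset.univ), ∑ y ∈ (Finset.univ \ Finset.image i Finset.univ).erase x, c s(x, y)) := by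
      intro p hp
      have hp2 : ¬ (p.2 : ℕ) < k := (Finset.mem_filter.mp hp).2
      have hmem1 := Finset.mem_filter.mp (Finset.mem_filter.mp hp).1
      have hp1 : ¬ (p.1 : ℕ) < k := hmem1.2
      have hadj : F.Adj p.1 p.2 := (Finset.mem_filter.mp hmem1.1).2
      exact L3 hk i hi p.1 p.2 (not_lt.mp hp1) (not_lt.mp hp2) hadj.ne (fun x y => c s(x, y))
    rw [Finset.sum_eq_card_nsmul hinner, nsmul_eq_mul]
    have hcardFF : ((((((Finset.univ ×ˢ Finset.univ).filter (fun p : Fin n × Fin n => F.Adj p.1 p.2)).filter (fun p : Fin n × Fin n => ¬ (p.1 : ℕ) < k)).filter (fun p : Fin n × Fin n => ¬ (p.2 : ℕ) < k)).card : ℕ) : ℝ) = 2 * ((F.edgeFinset.filter (fun e => ∀ v : Fin n, v ∈ e → k ≤ (v : ℕ))).card : ℝ) := by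
      have h2 := sum_edge_double F (fun e => if ∀ v ∈ e, k ≤ (v : ℕ) then (1 : ℝ) else 0)
      calc ((((((Finset.univ ×ˢ Finset.univ).filter (fun p : Fin n × Fin n => F.Adj p.1 p.2)).filter (fun p : Fin n × Fin n => ¬ (p.1 : ℕ) < k)).filter (fun p : Fin n × Fin n => ¬ (p.2 : ℕ) < k)).card : ℕ) : ℝ) = ∑ p ∈ ((((Finset.univ ×ˢ Finset.univ).filter (fun p : Fin n × Fin n => F.Adj p.1 p.2)).filter (fun p : Fin n × Fin n => ¬ (p.1 : ℕ) < k)).filter (fun p : Fin n × Fin n => ¬ (p.2 : ℕ) < k)), (1 : ℝ) := by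
            rw [Finset.sum_const, nsmul_eq_mul, mul_one]
        _ = ∑ p ∈ ((Finset.univ ×ˢ Finset.univ).filter (fun p : Fin n × Fin n => F.Adj p.1 p.2)), if (¬ (p.1 : ℕ) < k ∧ ¬ (p.2 : ℕ) < k) then (1 : ℝ) else 0 := by
            rw [Finset.filter_filter, Finset.sum_filter]
        _ = ∑ p ∈ ((Finset.univ ×ˢ Finset.univ).filter (fun p : Fin n × Fin n => F.Adj p.1 p.2)), (if ∀ v ∈ s(p.1, p.2), k ≤ (v : ℕ) then (1 : ℝ) else 0) := by
            apply Finset.sum_congr rfl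
            intro p _
            apply if_congr _ rfl rfl
            rw [Sym2.ball]
            simp [not_lt]
        _ = 2 * ∑ e ∈ F.edgeFinset, (if ∀ v ∈ e, k ≤ (v : ℕ) then (1 : ℝ) else 0) := h2
        _ = 2 * ((F.edgeFinset.filter (fun e => ∀ v : Fin n, v ∈ e → k ≤ (v : ℕ))).card : ℝ) := by
            rw [← Finset.sum_filter, Finset.sum_const, nsmul_eq_mul, mul_one]
    have hV0 : (∑ x ∈ (Finset.univ \ Finset.image i Finset.univ), ∑ y ∈ (Finset.univ \ Finset.image i Finset.univ).erase x, c s(x, y)) = 2 * (∑ e ∈ (⊤ : SimpleGraph (Fin n)).edgeFinset.filter (fun e => ∀ v : Fin n, v ∈ e → v ∈ Finset.univ \ Finset.image i Finset.univ), c e) := by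
      have h2 := sum_edge_double (⊤ : SimpleGraph (Fin n)) (fun e => if ∀ v ∈ e, v ∈ (Finset.univ \ Finset.image i Finset.univ) then c e else 0)
      have hsets : ((Finset.univ ×ˢ Finset.univ).filter
            (fun p : Fin n × Fin n => p.1 ≠ p.2 ∧ p.1 ∈ (Finset.univ \ Finset.image i Finset.univ) ∧ p.2 ∈ (Finset.univ \ Finset.image i Finset.univ)))
          = ((Finset.univ ×ˢ Finset.univ).filter
              (fun p : Fin n × Fin n => (⊤ : SimpleGraph (Fin n)).Adj p.1 p.2)).filter
              (fun p => p.1 ∈ (Finset.univ \ Finset.image i Finset.univ) ∧ p.2 ∈ (Finset.univ \ Finset.image i Finset.univ)) := by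
        rw [Finset.filter_filter]
        apply Finset.filter_congr
        intro p _
        simp [SimpleGraph.top_adj]
      calc (∑ x ∈ (Finset.univ \ Finset.image i Finset.univ), ∑ y ∈ (Finset.univ \ Finset.image i Finset.univ).erase x, c s(x, y))
          = ∑ p ∈ (Finset.univ ×ˢ Finset.univ).filter
              (fun p : Fin n × Fin n => p.1 ≠ p.2 ∧ p.1 ∈ (Finset.univ \ Finset.image i Finset.univ) ∧ p.2 ∈ (Finset.univ \ Finset.image i Finset.univ)), c s(p.1, p.2) :=
            (pair_sum_lemma (Finset.univ \ Finset.image i Finset.univ) (fun x y => c s(x, y))).symm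
        _ = ∑ p ∈ ((Finset.univ ×ˢ Finset.univ).filter
              (fun p : Fin n × Fin n => (⊤ : SimpleGraph (Fin n)).Adj p.1 p.2)),
              (if p.1 ∈ (Finset.univ \ Finset.image i Finset.univ) ∧ p.2 ∈ (Finset.univ \ Finset.image i Finset.univ) then c s(p.1, p.2) else 0) := by
            rw [hsets, Finset.sum_filter]
        _ = ∑ p ∈ ((Finset.univ ×ˢ Finset.univ).filter
              (fun p : Fin n × Fin n => (⊤ : SimpleGraph (Fin n)).Adj p.1 p.2)),
              (if ∀ v ∈ s(p.1, p.2), v ∈ (Finset.univ \ Finset.image i Finset.univ) then c s(p.1, p.2) else 0) := by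
            apply Finset.sum_congr rfl
            intro p _
            exact if_congr (Sym2.ball).symm rfl rfl
        _ = 2 * ∑ e ∈ (⊤ : SimpleGraph (Fin n)).edgeFinset, (if ∀ v ∈ e, v ∈ (Finset.univ \ Finset.image i Finset.univ) then c e else 0) := h2
        _ = 2 * (∑ e ∈ (⊤ : SimpleGraph (Fin n)).edgeFinset.filter (fun e => ∀ v : Fin n, v ∈ e → v ∈ Finset.univ \ Finset.image i Finset.univ), c e) := by rw [← Finset.sum_filter]
    rw [hcardFF, hV0]
    by_cases hnk2 : 2 ≤ n - k
    · have hchoose : ((n - k).choose 2) * 2 = (n - k) * (n - k - 1) := by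
        rw [Nat.choose_two_right]
        apply Nat.div_mul_cancel
        have heq : (n - k - 1) + 1 = n - k := by omega
        have h3 : (n - k) * (n - k - 1) = (n - k - 1) * ((n - k - 1) + 1) := by
          rw [heq]; ring
        rw [h3]
        exact (Nat.even_mul_succ_self _).two_dvd
      have hfact : (n - k).factorial = (n - k) * ((n - k - 1) * (n - k - 2).factorial) := by
        set a := n - k - 2 with ha
        rw [show n - k - 1 = a + 1 by omega, show n - k = a + 2 by omega]
        rw [show a + 2 = (a + 1) + 1 from rfl, Nat.factorial_succ, Nat.factorial_succ]
      have hcc0 : (((n - k).choose 2 : ℕ) : ℝ) ≠ 0 :=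
        Nat.cast_ne_zero.mpr (Nat.choose_pos hnk2).ne'
      have hc' : (((n - k).choose 2 : ℕ) : ℝ) * 2 = ((n - k : ℕ) : ℝ) * ((n - k - 1 : ℕ) : ℝ) := by
        exact_mod_cast congrArg (fun x : ℕ => (x : ℝ)) hchoose
      have hf' : ((n - k).factorial : ℝ)
          = ((n - k : ℕ) : ℝ) * (((n - k - 1 : ℕ) : ℝ) * ((n - k - 2).factorial : ℝ)) := by
        exact_mod_cast congrArg (fun x : ℕ => (x : ℝ)) hfact
      have hinv : (((n - k).choose 2 : ℕ) : ℝ) * (((n - k).choose 2 : ℕ) : ℝ)⁻¹ = 1 :=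
        mul_inv_cancel₀ hcc0
      rw [hf', div_eq_mul_inv]
      linear_combination (2 * ((F.edgeFinset.filter (fun e => ∀ v : Fin n, v ∈ e → k ≤ (v : ℕ))).card : ℝ) * (∑ e ∈ (⊤ : SimpleGraph (Fin n)).edgeFinset.filter (fun e => ∀ v : Fin n, v ∈ e → v ∈ Finset.univ \ Finset.image i Finset.univ), c e) * ((n - k - 2).factorial : ℝ) * (((n - k).choose 2 : ℕ) : ℝ)⁻¹) * hc'
        + (-(4 * ((F.edgeFinset.filter (fun e => ∀ v : Fin n, v ∈ e → k ≤ (v : ℕ))).card : ℝ) * ((n - k - 2).factorial : ℝ) * (∑ e ∈ (⊤ : SimpleGraph (Fin n)).edgeFinset.filter (fun e => ∀ v : Fin n, v ∈ e → v ∈ Finset.univ \ Finset.image i Finset.univ), c e))) * hinv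
    · have hm0 : (F.edgeFinset.filter (fun e => ∀ v : Fin n, v ∈ e → k ≤ (v : ℕ))).card = 0 := by
        rw [Finset.card_eq_zero, Finset.filter_eq_empty_iff]
        intro e he
        revert he
        induction e using Sym2.ind with
        | _ a b =>
          intro he hcon
          have hadj : F.Adj a b := SimpleGraph.mem_edgeFinset.mp he
          have hab : (a : ℕ) ≠ (b : ℕ) := fun h => hadj.ne (Fin.ext h)
          have h1 := hcon a (Sym2.mem_mk_left a b)
          have h2 := hcon b (Sym2.mem_mk_right a b)
          have ha := a.isLt
          have hb := b.isLt
          omega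
      rw [hm0]
      norm_num
  -- assemble
  have key : (∑ π ∈ (Finset.univ.filter (fun π : Equiv.Perm (Fin n) => ∀ j : Fin k, π (Fin.castLE hk j) = i j)), ∑ e ∈ F.edgeFinset, c (e.map π))
      = ((n - k).factorial : ℝ) * ((∑ e ∈ F.edgeFinset.filter (fun e => ∀ v : Fin n, v ∈ e → (v : ℕ) < k), c (e.map (fixedEmb n k i))) + (∑ j : Fin k, ((∑ ℓ ∈ Finset.univ \ Finset.image i Finset.univ, c s(i j, ℓ)) / (((Finset.univ \ Finset.image i Finset.univ).card : ℝ))) * (((F.neighborFinset (Fin.castLE hk j)).filter (fun v : Fin n => k ≤ (v : ℕ))).card : ℝ)) + (((∑ e ∈ (⊤ : SimpleGraph (Fin n)).edgeFinset.filter (fun e => ∀ v : Fin n, v ∈ e → v ∈ Finset.univ \ Finset.image i Finset.univ), c e) / (((n - k).choose 2 : ℕ) : ℝ)) * ((F.edgeFinset.filter (fun e => ∀ v : Fin n, v ∈ e → k ≤ (v : ℕ))).card : ℝ))) := by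
    apply mul_left_cancel₀ (two_ne_zero (α := ℝ))
    calc 2 * (∑ π ∈ (Finset.univ.filter (fun π : Equiv.Perm (Fin n) => ∀ j : Fin k, π (Fin.castLE hk j) = i j)), ∑ e ∈ F.edgeFinset, c (e.map π))
        = 2 * ∑ e ∈ F.edgeFinset, ∑ π ∈ (Finset.univ.filter (fun π : Equiv.Perm (Fin n) => ∀ j : Fin k, π (Fin.castLE hk j) = i j)), c (e.map π) := by rw [Finset.sum_comm]
      _ = ∑ p ∈ ((Finset.univ ×ˢ Finset.univ).filter (fun p : Fin n × Fin n => F.Adj p.1 p.2)), ∑ π ∈ (Finset.univ.filter (fun π : Equiv.Perm (Fin n) => ∀ j : Fin k, π (Fin.castLE hk j) = i j)), c (s(p.1, p.2).map π) :=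
          (sum_edge_double F (fun e => ∑ π ∈ (Finset.univ.filter (fun π : Equiv.Perm (Fin n) => ∀ j : Fin k, π (Fin.castLE hk j) = i j)), c (e.map π))).symm
      _ = ∑ p ∈ ((Finset.univ ×ˢ Finset.univ).filter (fun p : Fin n × Fin n => F.Adj p.1 p.2)), ∑ π ∈ (Finset.univ.filter (fun π : Equiv.Perm (Fin n) => ∀ j : Fin k, π (Fin.castLE hk j) = i j)), c s(π p.1, π p.2) := by
          simp only [Sym2.map_pair_eq]
      _ = ((∑ p ∈ ((((Finset.univ ×ˢ Finset.univ).filter (fun p : Fin n × Fin n => F.Adj p.1 p.2)).filter (fun p : Fin n × Fin n => (p.1 : ℕ) < k)).filter (fun p : Fin n × Fin n => (p.2 : ℕ) < k)), ∑ π ∈ (Finset.univ.filter (fun π : Equiv.Perm (Fin n) => ∀ j : Fin k, π (Fin.castLE hk j) = i j)), c s(π p.1, π p.2)) + (∑ p ∈ ((((Finset.univ ×ˢ Finset.univ).filter (fun p : Fin n × Fin n => F.Adj p.1 p.2)).filter (fun p : Fin n × Fin n => (p.1 : ℕ) < k)).filter (fun p : Fin n × Fin n => ¬ (p.2 : ℕ)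 < k)), ∑ π ∈ (Finset.univ.filter (fun π : Equiv.Perm (Fin n) => ∀ j : Fin k, π (Fin.castLE hk j) = i j)), c s(π p.1, π p.2)))
          + ((∑ p ∈ ((((Finset.univ ×ˢ Finset.univ).filter (fun p : Fin n × Fin n => F.Adj p.1 p.2)).filter (fun p : Fin n × Fin n => ¬ (p.1 : ℕ) < k)).filter (fun p : Fin n × Fin n => (p.2 : ℕ) < k)), ∑ π ∈ (Finset.univ.filter (fun π : Equiv.Perm (Fin n) => ∀ j : Fin k, π (Fin.castLE hk j) = i j)), c s(π p.1, π p.2)) + (∑ p ∈ ((((Finset.univ ×ˢ Finset.univ).filter (fun p : Fin n × Fin n => F.Adj p.1 p.2)).filter (fun p : Fin n × Fin n => ¬ (p.1 : ℕ) < k)).filter (fun p : Fin n × Fin n => ¬ (p.2 : ℕ) < k)), ∑ π ∈ (Finset.univ.filter (fun π : Equiv.Perm (Fin n) => ∀ j : Fin k, π (Fin.castLE hk j) = i j)), c s(π p.1, π p.2))) := by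
          rw [← Finset.sum_filter_add_sum_filter_not ((Finset.univ ×ˢ Finset.univ).filter (fun p : Fin n × Fin n => F.Adj p.1 p.2))
              (fun p : Fin n × Fin n => (p.1 : ℕ) < k)
              (fun p : Fin n × Fin n => ∑ π ∈ (Finset.univ.filter (fun π : Equiv.Perm (Fin n) => ∀ j : Fin k, π (Fin.castLE hk j) = i j)), c s(π p.1, π p.2)),
            ← Finset.sum_filter_add_sum_filter_not (((Finset.univ ×ˢ Finset.univ).filter (fun p : Fin n × Fin n => F.Adj p.1 p.2)).filter (fun p : Fin n × Fin n => (p.1 : ℕ) < k))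
              (fun p : Fin n × Fin n => (p.2 : ℕ) < k)
              (fun p : Fin n × Fin n => ∑ π ∈ (Finset.univ.filter (fun π : Equiv.Perm (Fin n) => ∀ j : Fin k, π (Fin.castLE hk j) = i j)), c s(π p.1, π p.2)),
            ← Finset.sum_filter_add_sum_filter_not (((Finset.univ ×ˢ Finset.univ).filter (fun p : Fin n × Fin n => F.Adj p.1 p.2)).filter (fun p : Fin n × Fin n => ¬ (p.1 : ℕ) < k))
              (fun p : Fin n × Fin n => (p.2 : ℕ) < k)
              (fun p : Fin n × Fin n => ∑ π ∈ (Finset.univ.filter (fun π : Equiv.Perm (Fin n) => ∀ j : Fin k, π (Fin.castLE hk j) = i j)), c s(π p.1, π p.2))]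
      _ = (((n - k).factorial : ℝ) * (2 * (∑ e ∈ F.edgeFinset.filter (fun e => ∀ v : Fin n, v ∈ e → (v : ℕ) < k), c (e.map (fixedEmb n k i)))) + ((n - k).factorial : ℝ) * (∑ j : Fin k, ((∑ ℓ ∈ Finset.univ \ Finset.image i Finset.univ, c s(i j, ℓ)) / (((Finset.univ \ Finset.image i Finset.univ).card : ℝ))) * (((F.neighborFinset (Fin.castLE hk j)).filter (fun v : Fin n => k ≤ (v : ℕ))).card : ℝ))) + (((n - k).factorial : ℝ) * (∑ j : Fin k, ((∑ ℓ ∈ Finset.univ \ Finset.image i Finset.univ, c s(i j, ℓ)) / (((Finset.univ \ Finset.image i Finset.univ).card : ℝ))) * (((F.neighborFinset (Fin.castLE hk j)).filter (fun v : Fin n => k ≤ (v : ℕ))).card : ℝ)) + 2 * (((n - k).factorial : ℝ) * (((∑ e ∈ (⊤ : SimpleGraph (Fin n)).edgeFinset.filter (fun e => ∀ v : Fin n, v ∈ e → v ∈ Finset.univ \ Finset.image i Finset.univ), c e) / (((n - k).choose 2 : ℕ) : ℝ)) * ((F.edgeFinset.filter (fun e => ∀ v : Fin n, v ∈ e → k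 ≤ (v : ℕ))).card : ℝ)))) := by
          rw [eTT, eTF, eFT, eTF, eFF]
      _ = 2 * (((n - k).factorial : ℝ) * ((∑ e ∈ F.edgeFinset.filter (fun e => ∀ v : Fin n, v ∈ e → (v : ℕ) < k), c (e.map (fixedEmb n k i))) + (∑ j : Fin k, ((∑ ℓ ∈ Finset.univ \ Finset.image i Finset.univ, c s(i j, ℓ)) / (((Finset.univ \ Finset.image i Finset.univ).card : ℝ))) * (((F.neighborFinset (Fin.castLE hk j)).filter (fun v : Fin n => k ≤ (v : ℕ))).card : ℝ)) + (((∑ e ∈ (⊤ : SimpleGraph (Fin n)).edgeFinset.filter (fun e => ∀ v : Fin n, v ∈ e → v ∈ Finset.univ \ Finset.image i Finset.univ), c e) / (((n - k).choose 2 : ℕ) : ℝ)) * ((F.edgeFinset.filter (fun e => ∀ v : Fin n, v ∈ e → k ≤ (v : ℕ))).card : ℝ)))) := by ring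
  rw [key, one_div, inv_mul_cancel_left₀ hQ0]
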